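/- (Rudin–Forelli quasi-identity.) Let B(Ω) be an ℓ²-valued Bergman-type space. For all r, s ∈ ℝ, ∫_Ω |⟨K_z,K_w⟩_{B(Ω,ℂ)}|^{(r−s)/2} / ‖K_w‖^r_{B(Ω,ℂ)} dλ(w) ≃ ∫_Ω |⟨K_z,K_w⟩_{B(Ω,ℂ)}|^{(r+s)/2} / ( ‖K_z‖^s_{B(Ω,ℂ)} ‖K_w‖^r_{B(Ω,ℂ)} ) dλ(w), with implied constants independent of z ∈ Ω (they may depend on r and s). -/

import Mathlib

open MeasureTheory Filter Topology
open scoped NNReal ENNReal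

noncomputable section

/-- The sequence space `ℓ²`. -/
abbrev ℓ2 : Type := lp (fun _ : ℕ => ℂ) 2

/-- The standard orthonormal basis vectors of `ℓ²`. -/
abbrev eVec (k : ℕ) : ℓ2 := lp.single 2 k (1 : ℂ)

/-- A vector of `ℓ²` is *finite* if all but finitely many coordinates vanish. -/
def FinVec (e : ℓ2) : Prop := ∃ d : ℕ, ∀ k : ℕ, d ≤ k → (e : ∀ _ : ℕ, ℂ) k = 0

abbrev Cn (n : ℕ) := EuclideanSpace ℂ (Fin n)

instance {n : ℕ} : MeasurableSpace (Cn n) := borel _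
instance {n : ℕ} : BorelSpace (Cn n) := ⟨rfl⟩

/-- Auxiliary: `‖K_z‖_{B(Ω,ℂ)}`, the Bergman norm of the reproducing kernel. -/
def nKAux {n : ℕ} (σ : Measure (Cn n)) (K : Cn n → Cn n → ℂ) (z : Cn n) : ℝ :=
  Real.sqrt (∫ w, ‖K z w‖ ^ 2 ∂σ)

/-- Auxiliary: the `L²(σ)` inner product (conjugate-linear in the first slot). -/
def ipAux {n : ℕ} (σ : Measure (Cn n)) (f g : Cn n → ℂ) : ℂ :=
  ∫ w, (starRingEnd ℂ) (f w) * g w ∂σ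

/-- Auxiliary: the measure `dλ(z) = ‖K_z‖²_{B(Ω,ℂ)} dσ(z)`. -/
def lamAux {n : ℕ} (σ : Measure (Cn n)) (K : Cn n → Cn n → ℂ) : Measure (Cn n) :=
  σ.withDensity (fun w => ENNReal.ofReal (∫ u, ‖K w u‖ ^ 2 ∂σ))

/-- The projection `I^{(d)}` of `ℓ²` onto the span of the first `d` basis vectors. -/
def headProj (d : ℕ) (v : ℓ2) : ℓ2 :=
  ∑ k ∈ Finset.range d, lp.single 2 k ((v : ∀ _ : ℕ, ℂ) k)

/-- The complementary projection `I_{(d)} = I - I^{(d)}`. -/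
def tailProj (d : ℕ) (v : ℓ2) : ℓ2 := v - headProj d v

/-- Entrywise measurability of an operator-valued symbol. -/
def SymbMeasurable {n : ℕ} (F : Cn n → (ℓ2 →L[ℂ] ℓ2)) : Prop :=
  ∀ i k : ℕ, Measurable (fun z => ((F z (eVec k)) : ∀ _ : ℕ, ℂ) i)

/-- Boundedness of an operator-valued symbol. -/
def SymbBounded {n : ℕ} (F : Cn n → (ℓ2 →L[ℂ] ℓ2)) : Prop := ∃ C : ℝ, ∀ z, ‖F z‖ ≤ C

/-- `F` is `d`-finite: `F(z) = I^{(d)} F(z) I^{(d)}` for all `z`. -/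
def SymbDFinite {n : ℕ} (d : ℕ) (F : Cn n → (ℓ2 →L[ℂ] ℓ2)) : Prop :=
  ∀ z v, F z v = headProj d (F z (headProj d v))

/-- The symbol class `L^∞_fin`. -/
def SymbLinfFin {n : ℕ} (F : Cn n → (ℓ2 →L[ℂ] ℓ2)) : Prop :=
  SymbMeasurable F ∧ SymbBounded F ∧ ∃ d : ℕ, SymbDFinite d F

/-- An `ℓ²`-valued Bergman-type space, following Rahm,
"A Reproducing Kernel Thesis for Operators on ℓ²-valued Bergman-type Function Spaces".
The data: a domain `Ω ⊆ ℂⁿ`, involutive automorphisms `φ_z`, a quasi-invariant metric `d`,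
a finite Borel measure `σ`, and a reproducing kernel `K`, subject to axioms A.1–A.7. -/
structure VBergman (n : ℕ) where
  /-- The domain `Ω`. -/
  Ω : Set (Cn n)
  isOpen_Ω : IsOpen Ω
  isConnected_Ω : IsConnected Ω
  zero_mem : (0 : Cn n) ∈ Ω
  /-- A.1: the involutions `φ_z`. -/
  φ : Cn n → Cn n → Cn n
  φ_analytic : ∀ z ∈ Ω, AnalyticOnNhd ℂ (φ z) Ω
  φ_mapsTo : ∀ z ∈ Ω, Set.MapsTo (φ z) Ω Ω
  φ_involutive : ∀ z ∈ Ω, ∀ w ∈ Ω, φ z (φ z w) = w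
  φ_zero : ∀ z ∈ Ω, φ z 0 = z
  /-- A.2: the metric `𝔡` on `Ω`. -/
  d : Cn n → Cn n → ℝ
  d_nonneg : ∀ u ∈ Ω, ∀ v ∈ Ω, 0 ≤ d u v
  d_eq_zero_iff : ∀ u ∈ Ω, ∀ v ∈ Ω, (d u v = 0 ↔ u = v)
  d_symm : ∀ u ∈ Ω, ∀ v ∈ Ω, d u v = d v u
  d_triangle : ∀ u ∈ Ω, ∀ v ∈ Ω, ∀ w ∈ Ω, d u w ≤ d u v + d v w
  d_quasiInvariant : ∃ c C : ℝ, 0 < c ∧ ∀ z ∈ Ω, ∀ u ∈ Ω, ∀ v ∈ Ω,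
      c * d u v ≤ d (φ z u) (φ z v) ∧ d (φ z u) (φ z v) ≤ C * d u v
  d_separable : ∃ S : Set (Cn n), S.Countable ∧ S ⊆ Ω ∧
      ∀ x ∈ Ω, ∀ ε : ℝ, 0 < ε → ∃ y ∈ S, d x y < ε
  d_properBalls : ∀ z ∈ Ω, ∀ r : ℝ, IsCompact {w | w ∈ Ω ∧ d z w ≤ r}
  /-- A.3: the finite Borel measure `σ`. -/
  σ : Measure (Cn n)
  σ_finite : IsFiniteMeasure σ
  σ_carried : σ Ωᶜ = 0
  /-- A.3: the reproducing kernel `K_z` of `B(Ω,ℂ)`. -/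
  K : Cn n → Cn n → ℂ
  K_analytic : ∀ z ∈ Ω, AnalyticOnNhd ℂ (K z) Ω
  K_memLp : ∀ z ∈ Ω, MemLp (K z) 2 σ
  reproducing_sc : ∀ g : Cn n → ℂ, AnalyticOnNhd ℂ g Ω → MemLp g 2 σ →
      ∀ z ∈ Ω, g z = ∫ w, (starRingEnd ℂ) (K z w) * g w ∂σ
  reproducing_vec : ∀ f : Cn n → ℓ2,
      (∀ k : ℕ, AnalyticOnNhd ℂ (fun z => (f z : ∀ _ : ℕ, ℂ) k) Ω) → MemLp f 2 σ →
      ∀ z ∈ Ω, f z = ∫ w, (starRingEnd ℂ) (K z w) • f w ∂σ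
  nK_pos : ∀ z ∈ Ω, 0 < nKAux σ K z
  nK_continuous : ∀ z ∈ Ω, ∀ ε : ℝ, 0 < ε → ∃ δ : ℝ, 0 < δ ∧
      ∀ w ∈ Ω, d z w < δ → |nKAux σ K w - nKAux σ K z| < ε
  /-- A.4: quasi-invariance of `λ` under the `φ_z`. -/
  lam_quasiInvariant : ∃ c C : ℝ≥0, 0 < c ∧ ∀ z ∈ Ω, ∀ E : Set (Cn n),
      MeasurableSet E → E ⊆ Ω →
      (c : ℝ≥0∞) * lamAux σ K E ≤ lamAux σ K (φ z '' E) ∧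
      lamAux σ K (φ z '' E) ≤ (C : ℝ≥0∞) * lamAux σ K E
  /-- A.4: `λ` is doubling. -/
  lam_doubling : ∃ C : ℝ≥0, 1 < C ∧ ∀ z ∈ Ω, ∀ r : ℝ, 0 < r →
      lamAux σ K {w | w ∈ Ω ∧ d z w < 2 * r} ≤
        (C : ℝ≥0∞) * lamAux σ K {w | w ∈ Ω ∧ d z w < r}
  /-- A.5: `|⟨k_z,k_w⟩| ≃ 1/‖K_{φ_z(w)}‖`. -/
  A5 : ∃ c C : ℝ, 0 < c ∧ ∀ z ∈ Ω, ∀ w ∈ Ω,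
      c / nKAux σ K (φ z w) ≤ ‖ipAux σ (K z) (K w)‖ / (nKAux σ K z * nKAux σ K w) ∧
      ‖ipAux σ (K z) (K w)‖ / (nKAux σ K z * nKAux σ K w) ≤ C / nKAux σ K (φ z w)
  /-- A.6: the Rudin–Forelli exponent `κ`. -/
  κ : ℝ
  κ_nonneg : 0 ≤ κ
  κ_lt_two : κ < 2
  RF_pos : 0 < κ → ∀ r s : ℝ, κ < r → 0 < s → s < κ → ∃ C : ℝ, ∀ z ∈ Ω,
      ∫ w, ‖ipAux σ (K z) (K w)‖ ^ ((r + s) / 2) /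
        (nKAux σ K z ^ s * nKAux σ K w ^ r) ∂(lamAux σ K) ≤ C
  RF_zero : κ = 0 → ∀ r : ℝ, 0 < r → ∃ C : ℝ, ∀ z ∈ Ω,
      ∫ w, ‖ipAux σ (K z) (K w)‖ ^ r /
        (nKAux σ K z ^ r * nKAux σ K w ^ r) ∂(lamAux σ K) ≤ C
  /-- A.7: `‖K_z‖ → ∞` as `𝔡(z,0) → ∞`. -/
  K_blowup : ∀ M : ℝ, ∃ R : ℝ, ∀ z ∈ Ω, R ≤ d z 0 → M ≤ nKAux σ K z

namespace VBergman

variable {n : ℕ} (B : VBergman n)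

/-- `‖K_z‖_{B(Ω,ℂ)}`. -/
def nK (z : Cn n) : ℝ := nKAux B.σ B.K z

/-- The normalized reproducing kernel `k_z`. -/
def kf (z : Cn n) : Cn n → ℂ := fun w => B.K z w / (B.nK z : ℂ)

/-- The `L²(σ)` norm of a scalar-valued function. -/
def nrmSc (g : Cn n → ℂ) : ℝ := Real.sqrt (∫ w, ‖g w‖ ^ 2 ∂B.σ)

/-- The `L²(σ;ℓ²)` norm of an `ℓ²`-valued function. -/
def nrmV (f : Cn n → ℓ2) : ℝ := Real.sqrt (∫ w, ‖f w‖ ^ 2 ∂B.σ)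

/-- The `L²(σ)` inner product of scalar functions (conjugate-linear in the first slot). -/
def ipSc (f g : Cn n → ℂ) : ℂ := ipAux B.σ f g

/-- The `L²(σ;ℓ²)` inner product (conjugate-linear in the first slot). -/
def ipV (f g : Cn n → ℓ2) : ℂ := ∫ w, (inner ℂ (f w) (g w) : ℂ) ∂B.σ

/-- Membership in the scalar Bergman-type space `B(Ω,ℂ)`. -/
def MemBsc (g : Cn n → ℂ) : Prop := AnalyticOnNhd ℂ g B.Ω ∧ MemLp g 2 B.σ

/-- Membership in the `ℓ²`-valued Bergman-type space `B(Ω)`. -/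
def MemB (f : Cn n → ℓ2) : Prop :=
  (∀ k : ℕ, AnalyticOnNhd ℂ (fun z => (f z : ∀ _ : ℕ, ℂ) k) B.Ω) ∧ MemLp f 2 B.σ

/-- The function `w ↦ k_z(w) e` for a vector `e ∈ ℓ²`. -/
def kvec (z : Cn n) (e : ℓ2) : Cn n → ℓ2 := fun w => B.kf z w • e

/-- The translation operator `U_z` on `ℓ²`-valued functions. -/
def U (z : Cn n) (f : Cn n → ℓ2) : Cn n → ℓ2 := fun w => B.kf z w • f (B.φ z w)

/-- The translation operator `U_z` on scalar functions. -/
def Usc (z : Cn n) (g : Cn n → ℂ) : Cn n → ℂ := fun w => B.kf z w * g (B.φ z w)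

/-- The Bergman projection on `ℓ²`-valued functions. -/
def Pop (f : Cn n → ℓ2) : Cn n → ℓ2 := fun z => ∫ w, (starRingEnd ℂ) (B.K z w) • f w ∂B.σ

/-- The Bergman projection on scalar functions. -/
def PopSc (g : Cn n → ℂ) : Cn n → ℂ := fun z => ∫ w, (starRingEnd ℂ) (B.K z w) * g w ∂B.σ

/-- The Toeplitz operator with operator-valued symbol `F`. -/
def Top (F : Cn n → (ℓ2 →L[ℂ] ℓ2)) (f : Cn n → ℓ2) : Cn n → ℓ2 :=
  B.Pop (fun w => F w (f w))

/-- The Toeplitz operator with scalar symbol `v` acting on scalar functions. -/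
def TopSc (v : Cn n → ℂ) (g : Cn n → ℂ) : Cn n → ℂ := B.PopSc (fun w => v w * g w)

/-- The set of functions `k_z e` with `z ∈ Ω` and `e ∈ ℓ²` a finite vector. -/
def kerSpanSet : Set (Cn n → ℓ2) :=
  {f | ∃ z ∈ B.Ω, ∃ e : ℓ2, FinVec e ∧ f = B.kvec z e}

/-- The linear span of the normalized reproducing kernels `k_z e` (with `e` finite). -/
def kerSpan : Submodule ℂ (Cn n → ℓ2) := Submodule.span ℂ B.kerSpanSet

/-- `T` is linear on `B(Ω)`. -/
def IsLinOn (T : (Cn n → ℓ2) → (Cn n → ℓ2)) : Prop :=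
  (∀ f g, B.MemB f → B.MemB g → T (f + g) = T f + T g) ∧
  (∀ (c : ℂ) (f), B.MemB f → T (c • f) = c • T f)

/-- `T` maps `B(Ω)` into `B(Ω)`. -/
def MapsB (T : (Cn n → ℓ2) → (Cn n → ℓ2)) : Prop := ∀ f, B.MemB f → B.MemB (T f)

/-- The operator norm of `T` on `B(Ω)`. -/
def opNorm (T : (Cn n → ℓ2) → (Cn n → ℓ2)) : ℝ :=
  sInf {C : ℝ | 0 ≤ C ∧ ∀ f, B.MemB f → B.nrmV (T f) ≤ C * B.nrmV f}

/-- `T` is a compact operator on `B(Ω)`: bounded sequences in `B(Ω)` have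
subsequences whose images converge in norm. -/
def IsCompactOp (T : (Cn n → ℓ2) → (Cn n → ℓ2)) : Prop :=
  ∀ f : ℕ → (Cn n → ℓ2), (∀ m, B.MemB (f m)) → (∀ m, B.nrmV (f m) ≤ 1) →
    ∃ (g : Cn n → ℓ2) (ψ : ℕ → ℕ), StrictMono ψ ∧
      Tendsto (fun m => B.nrmV (T (f (ψ m)) - g)) atTop (nhds 0)

/-- The essential norm of `T` on `B(Ω)`. -/
def essNorm (T : (Cn n → ℓ2) → (Cn n → ℓ2)) : ℝ :=
  sInf {x : ℝ | ∃ A, B.IsLinOn A ∧ B.MapsB A ∧ B.IsCompactOp A ∧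
    x = B.opNorm (fun f => T f - A f)}

/-- `S` is an adjoint of `T` on `B(Ω)`. -/
def IsAdjointPair (T S : (Cn n → ℓ2) → (Cn n → ℓ2)) : Prop :=
  ∀ f g, B.MemB f → B.MemB g → B.ipV (T f) g = B.ipV f (S g)

/-- The filter of neighborhoods of the boundary: `𝔡(z,0) → ∞` within `Ω`. -/
def farFilter : Filter (Cn n) := ⨅ R : ℝ, Filter.principal {z | z ∈ B.Ω ∧ R ≤ B.d z 0}

/-- Entries of the Berezin transform:
`⟨T̃(z)e_k, e_i⟩ = ⟨T(k_z e_k), k_z e_i⟩_{B(Ω)}`. -/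
def berezin (T : (Cn n → ℓ2) → (Cn n → ℓ2)) (z : Cn n) (k i : ℕ) : ℂ :=
  B.ipV (B.kvec z (eVec i)) (T (B.kvec z (eVec k)))

/-- The symbol class `BUCO`: finite, bounded, uniformly continuous symbols. -/
def SymbBUCO (F : Cn n → (ℓ2 →L[ℂ] ℓ2)) : Prop :=
  SymbMeasurable F ∧ SymbBounded F ∧ (∃ d : ℕ, SymbDFinite d F) ∧
  ∀ ε : ℝ, 0 < ε → ∃ δ : ℝ, 0 < δ ∧
    ∀ z ∈ B.Ω, ∀ w ∈ B.Ω, B.d z w < δ → ‖F z - F w‖ < ε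

/-- Scalar symbols which are bounded and uniformly continuous on `(Ω,𝔡)`. -/
def SymbBUC (v : Cn n → ℂ) : Prop :=
  Measurable v ∧ (∃ C : ℝ, ∀ z, ‖v z‖ ≤ C) ∧
  ∀ ε : ℝ, 0 < ε → ∃ δ : ℝ, 0 < δ ∧
    ∀ z ∈ B.Ω, ∀ w ∈ B.Ω, B.d z w < δ → ‖v z - v w‖ < ε

/-- A finite product of Toeplitz operators given by a list of symbols. -/
def ToeProd (us : List (Cn n → (ℓ2 →L[ℂ] ℓ2))) : (Cn n → ℓ2) → (Cn n → ℓ2) :=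
  us.foldr (fun u S => fun f => B.Top u (S f)) id

/-- Membership in the (operator-norm closed) Toeplitz algebra generated by the
Toeplitz operators whose symbols satisfy `Symb`. -/
def InToeAlg (Symb : (Cn n → (ℓ2 →L[ℂ] ℓ2)) → Prop)
    (T : (Cn n → ℓ2) → (Cn n → ℓ2)) : Prop :=
  ∀ ε : ℝ, 0 < ε → ∃ (L : ℕ) (us : Fin L → List (Cn n → (ℓ2 →L[ℂ] ℓ2))),
    (∀ l : Fin L, ∀ u ∈ us l, Symb u) ∧
    ∀ f, B.MemB f → B.nrmV (fun z => T f z - ∑ l : Fin L, B.ToeProd (us l) f z) ≤ ε * B.nrmV f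

/-- A finite product of scalar Toeplitz operators. -/
def ToeProdSc (vs : List (Cn n → ℂ)) : (Cn n → ℂ) → (Cn n → ℂ) :=
  vs.foldr (fun v S => fun g => B.TopSc v (S g)) id

/-- Membership in the scalar Toeplitz algebra generated by symbols satisfying `Symb`. -/
def InToeAlgSc (Symb : (Cn n → ℂ) → Prop) (T : (Cn n → ℂ) → (Cn n → ℂ)) : Prop :=
  ∀ ε : ℝ, 0 < ε → ∃ (L : ℕ) (vs : Fin L → List (Cn n → ℂ)),
    (∀ l : Fin L, ∀ v ∈ vs l, Symb v) ∧
    ∀ g, B.MemBsc g → B.nrmSc (fun z => T g z - ∑ l : Fin L, B.ToeProdSc (vs l) g z) ≤ ε * B.nrmSc g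

/-- A positive measure `ν` is Carleson with respect to `σ`. -/
def Carleson (ν : Measure (Cn n)) : Prop :=
  ∃ C : ℝ, ∀ g, B.MemBsc g → ∫ w, ‖g w‖ ^ 2 ∂ν ≤ C * ∫ w, ‖g w‖ ^ 2 ∂B.σ

/-- Assumption A.8: for every scalar measure `dμ = h dν` whose total variation `ν`
is Carleson with respect to `σ`, the Toeplitz operator `T_μ` lies in the scalar
Toeplitz algebra generated by bounded, uniformly continuous symbols. -/
def A8 : Prop :=
  ∀ (ν : Measure (Cn n)) (h : Cn n → ℂ), Measurable h → (∀ w, ‖h w‖ ≤ 1) →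
    B.Carleson ν →
    B.InToeAlgSc B.SymbBUC (fun g z => ∫ w, (starRingEnd ℂ) (B.K z w) * (h w * g w) ∂ν)

/-- The space is *strong* if the quasi-equalities in A.2, A.4, A.5 hold with equality. -/
def IsStrong : Prop :=
  (∀ z ∈ B.Ω, ∀ u ∈ B.Ω, ∀ v ∈ B.Ω, B.d (B.φ z u) (B.φ z v) = B.d u v) ∧
  (∀ z ∈ B.Ω, ∀ E : Set (Cn n), MeasurableSet E → E ⊆ B.Ω →
    lamAux B.σ B.K (B.φ z '' E) = lamAux B.σ B.K E) ∧
  (∀ z ∈ B.Ω, ∀ w ∈ B.Ω,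
    ‖B.ipSc (B.kf z) (B.kf w)‖ = 1 / B.nK (B.φ z w))

end VBergman


/-- measurability of real rpow with constant exponent -/
lemma RF.measurable_rpow_const (c : ℝ) : Measurable fun x : ℝ => x ^ c := by
  have h : (fun x : ℝ => x ^ c) = fun x =>
      if x = 0 then (if c = 0 then 1 else 0)
      else Real.exp (Real.log x * c) * (if x < 0 then Real.cos (c * Real.pi) else 1) := by
    funext x
    rcases lt_trichotomy x 0 with hx | hx | hx
    · rw [Real.rpow_def_of_neg hx]
      simp [hx.ne, hx, mul_comm]
    · subst hx
      by_cases hc : c = 0 <;> simp [hc, Real.rpow_zero, Real.zero_rpow]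
    · rw [Real.rpow_def_of_pos hx]
      simp [hx.ne', not_lt.mpr hx.le]
  rw [h]
  refine Measurable.ite (by simpa using (MeasurableSet.singleton (0:ℝ))) measurable_const ?_
  exact (Real.measurable_exp.comp (Real.measurable_log.mul_const c)).mul
    (Measurable.ite (measurableSet_lt measurable_id measurable_const)
      measurable_const measurable_const)

/-- rpow sandwich -/
lemma RF.rpow_sandwich {c C x y : ℝ} (hc : 0 < c) (hx : 0 < x)
    (h1 : c * x ≤ y) (h2 : y ≤ C * x) (e : ℝ) :
    min (c ^ e) (C ^ e) * x ^ e ≤ y ^ e ∧ y ^ e ≤ max (c ^ e) (C ^ e) * x ^ e := by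
  have hy : 0 < y := lt_of_lt_of_le (mul_pos hc hx) h1
  have hC : 0 < C := by nlinarith
  rcases le_or_gt 0 e with he | he
  · constructor
    · calc min (c ^ e) (C ^ e) * x ^ e ≤ c ^ e * x ^ e := by
            have := Real.rpow_nonneg hx.le e
            gcongr
            exact min_le_left _ _
        _ = (c * x) ^ e := (Real.mul_rpow hc.le hx.le).symm
        _ ≤ y ^ e := Real.rpow_le_rpow (by positivity) h1 he
    · calc y ^ e ≤ (C * x) ^ e := Real.rpow_le_rpow hy.le h2 he
        _ = C ^ e * x ^ e := Real.mul_rpow hC.le hx.le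
        _ ≤ max (c ^ e) (C ^ e) * x ^ e := by
            have := Real.rpow_nonneg hx.le e
            gcongr
            exact le_max_right _ _
  · constructor
    · calc min (c ^ e) (C ^ e) * x ^ e ≤ C ^ e * x ^ e := by
            have := Real.rpow_nonneg hx.le e
            gcongr
            exact min_le_right _ _
        _ = (C * x) ^ e := (Real.mul_rpow hC.le hx.le).symm
        _ ≤ y ^ e := Real.rpow_le_rpow_of_nonpos hy h2 he.le
    · calc y ^ e ≤ (c * x) ^ e := Real.rpow_le_rpow_of_nonpos (mul_pos hc hx) h1 he.le
        _ = c ^ e * x ^ e := Real.mul_rpow hc.le hx.le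
        _ ≤ max (c ^ e) (C ^ e) * x ^ e := by
            have := Real.rpow_nonneg hx.le e
            gcongr
            exact le_max_left _ _


namespace RF

variable {n : ℕ} (B : VBergman n)

lemma measΩ : MeasurableSet B.Ω := B.isOpen_Ω.measurableSet

lemma lam_compl : lamAux B.σ B.K B.Ωᶜ = 0 :=
  withDensity_absolutelyContinuous B.σ _ B.σ_carried

lemma ae_memΩ : ∀ᵐ w ∂(lamAux B.σ B.K), w ∈ B.Ω := by
  have := lam_compl B
  rw [Filter.eventually_iff, mem_ae_iff]
  simpa using this

lemma lam_inter (A : Set (Cn n)) : lamAux B.σ B.K A = lamAux B.σ B.K (A ∩ B.Ω) := by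
  refine le_antisymm ?_ (measure_mono Set.inter_subset_left)
  calc lamAux B.σ B.K A = lamAux B.σ B.K ((A ∩ B.Ω) ∪ (A ∩ B.Ωᶜ)) := by
        rw [Set.inter_union_compl]
    _ ≤ lamAux B.σ B.K (A ∩ B.Ω) + lamAux B.σ B.K (A ∩ B.Ωᶜ) := measure_union_le _ _
    _ ≤ lamAux B.σ B.K (A ∩ B.Ω) + lamAux B.σ B.K B.Ωᶜ := by
        gcongr
        exact Set.inter_subset_right
    _ = lamAux B.σ B.K (A ∩ B.Ω) := by rw [lam_compl B, add_zero]

lemma lam_restrict : (lamAux B.σ B.K).restrict B.Ω = lamAux B.σ B.K :=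
  Measure.restrict_eq_self_of_ae_mem (ae_memΩ B)

lemma meas_ball {y : Cn n} (hy : y ∈ B.Ω) (q : ℝ) :
    MeasurableSet {w | w ∈ B.Ω ∧ B.d y w < q} := by
  have h : {w | w ∈ B.Ω ∧ B.d y w < q} =
      ⋃ m : ℕ, {w | w ∈ B.Ω ∧ B.d y w ≤ q - 1 / (m + 1)} := by
    ext w
    simp only [Set.mem_setOf_eq, Set.mem_iUnion]
    constructor
    · rintro ⟨hw, hd⟩
      obtain ⟨m, hm⟩ := exists_nat_one_div_lt (show (0:ℝ) < q - B.d y w by linarith)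
      exact ⟨m, hw, by linarith⟩
    · rintro ⟨m, hw, hd⟩
      have h0 : (0:ℝ) < 1 / ((m:ℝ) + 1) := by positivity
      exact ⟨hw, by linarith⟩
  rw [h]
  exact MeasurableSet.iUnion fun m => (B.d_properBalls y hy _).measurableSet

lemma meas_dopen {U : Set (Cn n)} (hUΩ : U ⊆ B.Ω)
    (hU : ∀ x ∈ U, ∃ δ : ℝ, 0 < δ ∧ ∀ w ∈ B.Ω, B.d x w < δ → w ∈ U) :
    MeasurableSet U := by
  obtain ⟨S, hSc, hSΩ, hSd⟩ := B.d_separable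
  have h : U = ⋃ y ∈ S, ⋃ q : ℚ, ⋃ (_ : {w | w ∈ B.Ω ∧ B.d y w < (q:ℝ)} ⊆ U),
      {w | w ∈ B.Ω ∧ B.d y w < (q:ℝ)} := by
    apply Set.Subset.antisymm
    · intro x hx
      have hxΩ := hUΩ hx
      obtain ⟨δ, hδ, hball⟩ := hU x hx
      obtain ⟨y, hyS, hxy⟩ := hSd x hxΩ (δ / 4) (by linarith)
      obtain ⟨q, hq1, hq2⟩ := exists_rat_btwn (show (δ/4 : ℝ) < δ/2 by linarith)
      have hyΩ := hSΩ hyS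
      refine Set.mem_iUnion₂.mpr ⟨y, hyS, Set.mem_iUnion.mpr ⟨q, Set.mem_iUnion.mpr ⟨?_, ?_⟩⟩⟩
      · rintro w ⟨hwΩ, hwd⟩
        apply hball w hwΩ
        have ht := B.d_triangle x hxΩ y hyΩ w hwΩ
        linarith
      · exact ⟨hxΩ, by rw [B.d_symm y hyΩ x hxΩ]; linarith⟩
    · intro x hx
      simp only [Set.mem_iUnion] at hx
      obtain ⟨y, hyS, q, hsub, hmem⟩ := hx
      exact hsub hmem
  rw [h]
  exact MeasurableSet.biUnion hSc fun y hy =>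
    MeasurableSet.iUnion fun q => MeasurableSet.iUnion fun _ => meas_ball B (hSΩ hy) q

lemma meas_indicator_nK : Measurable (B.Ω.indicator (nKAux B.σ B.K)) := by
  apply measurable_of_Iio
  intro t
  have h : (B.Ω.indicator (nKAux B.σ B.K)) ⁻¹' (Set.Iio t) =
      {w | w ∈ B.Ω ∧ nKAux B.σ B.K w < t} ∪ (B.Ωᶜ ∩ {_w : Cn n | (0:ℝ) < t}) := by
    ext w
    by_cases hw : w ∈ B.Ω <;> simp [Set.indicator_apply, hw]
  rw [h]
  refine (meas_dopen B (fun w hw => hw.1) ?_).union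
    ((measΩ B).compl.inter (MeasurableSet.const _))
  rintro x ⟨hx, hxt⟩
  obtain ⟨δ, hδ, hcont⟩ := B.nK_continuous x hx (t - nKAux B.σ B.K x) (by linarith)
  refine ⟨δ, hδ, fun w hw hdw => ⟨hw, ?_⟩⟩
  have h2 := (abs_lt.mp (hcont w hw hdw)).2
  linarith

lemma aemeas_nK : AEMeasurable (nKAux B.σ B.K) (lamAux B.σ B.K) :=
  (meas_indicator_nK B).aemeasurable.congr <| by
    filter_upwards [ae_memΩ B] with w hw
    exact Set.indicator_of_mem hw _

lemma ip_conj {z : Cn n} (hz : z ∈ B.Ω) {w : Cn n} (hw : w ∈ B.Ω) :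
    ipAux B.σ (B.K z) (B.K w) = (starRingEnd ℂ) (B.K z w) := by
  have h1 : B.K z w = ipAux B.σ (B.K w) (B.K z) :=
    B.reproducing_sc (B.K z) (B.K_analytic z hz) (B.K_memLp z hz) w hw
  have h2 : ipAux B.σ (B.K w) (B.K z) = (starRingEnd ℂ) (ipAux B.σ (B.K z) (B.K w)) := by
    unfold ipAux
    rw [← integral_conj]
    congr 1
    funext u
    simp only [map_mul, RingHomCompTriple.comp_apply, Complex.conj_conj, RingHom.id_apply]
    ring
  rw [h1, h2, Complex.conj_conj]

lemma aemeas_ipn {z : Cn n} (hz : z ∈ B.Ω) :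
    AEMeasurable (fun w => ‖ipAux B.σ (B.K z) (B.K w)‖) (lamAux B.σ B.K) := by
  have hK : AEMeasurable (B.K z) (lamAux B.σ B.K) := by
    have := ((B.K_analytic z hz).continuousOn).aemeasurable (μ := lamAux B.σ B.K) (measΩ B)
    rwa [lam_restrict B] at this
  refine hK.norm.congr ?_
  filter_upwards [ae_memΩ B] with w hw
  rw [ip_conj B hz hw, RCLike.norm_conj]

end RF

namespace RF

variable {n : ℕ} (B : VBergman n)

/-- Change of variables for the measure `λ` under the involutions `φ_z`. -/
lemma cov : ∃ c C : ℝ≥0, 0 < c ∧ 1 ≤ C ∧ ∀ z ∈ B.Ω, ∀ G : Cn n → ℝ≥0∞,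
    AEMeasurable G (lamAux B.σ B.K) →
    ((c : ℝ≥0∞) * ∫⁻ w, G w ∂(lamAux B.σ B.K) ≤ ∫⁻ w, G (B.φ z w) ∂(lamAux B.σ B.K) ∧
     ∫⁻ w, G (B.φ z w) ∂(lamAux B.σ B.K) ≤ (C : ℝ≥0∞) * ∫⁻ w, G w ∂(lamAux B.σ B.K)) := by
  obtain ⟨c, C, hc, hQI⟩ := B.lam_quasiInvariant
  refine ⟨c, max C 1, hc, le_max_right _ _, ?_⟩
  intro z hz G hG
  have hφae : AEMeasurable (B.φ z) (lamAux B.σ B.K) := by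
    have := ((B.φ_analytic z hz).continuousOn).aemeasurable (μ := lamAux B.σ B.K) (measΩ B)
    rwa [lam_restrict B] at this
  set μz := Measure.map (B.φ z) (lamAux B.σ B.K) with hμz
  have key : ∀ E : Set (Cn n), MeasurableSet E →
      μz E = lamAux B.σ B.K (B.φ z '' (E ∩ B.Ω)) := by
    intro E hE
    rw [hμz, Measure.map_apply_of_aemeasurable hφae hE, lam_inter B]
    congr 1
    ext w
    constructor
    · rintro ⟨hwE, hwΩ⟩
      exact ⟨B.φ z w, ⟨hwE, B.φ_mapsTo z hz hwΩ⟩, B.φ_involutive z hz w hwΩ⟩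
    · rintro ⟨v, ⟨hvE, hvΩ⟩, rfl⟩
      refine ⟨?_, B.φ_mapsTo z hz hvΩ⟩
      show B.φ z (B.φ z v) ∈ E
      rw [B.φ_involutive z hz v hvΩ]
      exact hvE
  have hub : μz ≤ ((max C 1 : ℝ≥0) : ℝ≥0∞) • lamAux B.σ B.K := by
    refine Measure.le_intro fun E hE _ => ?_
    rw [key E hE, Measure.smul_apply, smul_eq_mul]
    calc lamAux B.σ B.K (B.φ z '' (E ∩ B.Ω)) ≤ (C : ℝ≥0∞) * lamAux B.σ B.K (E ∩ B.Ω) :=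
        (hQI z hz (E ∩ B.Ω) (hE.inter (measΩ B)) Set.inter_subset_right).2
      _ ≤ ((max C 1 : ℝ≥0) : ℝ≥0∞) * lamAux B.σ B.K E :=
          mul_le_mul' (ENNReal.coe_le_coe.mpr (le_max_left _ _))
            (measure_mono Set.inter_subset_left)
  have hlb : (c : ℝ≥0∞) • lamAux B.σ B.K ≤ μz := by
    refine Measure.le_intro fun E hE _ => ?_
    rw [key E hE, Measure.smul_apply, smul_eq_mul, lam_inter B E]
    exact (hQI z hz (E ∩ B.Ω) (hE.inter (measΩ B)) Set.inter_subset_right).1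
  have hac : μz ≪ lamAux B.σ B.K := by
    refine Measure.AbsolutelyContinuous.mk fun E hE hE0 => ?_
    have h1 := Measure.le_iff'.mp hub E
    rw [Measure.smul_apply, smul_eq_mul, hE0, mul_zero] at h1
    exact le_antisymm h1 (by simp)
  have hmap : ∫⁻ w, G (B.φ z w) ∂(lamAux B.σ B.K) = ∫⁻ w, G w ∂μz :=
    (lintegral_map' (hG.mono_ac hac) hφae).symm
  constructor
  · rw [hmap, ← smul_eq_mul, ← lintegral_smul_measure]
    exact lintegral_mono' hlb le_rfl
  · rw [hmap, ← smul_eq_mul, ← lintegral_smul_measure]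
    exact lintegral_mono' hub le_rfl

/-- The pointwise comparison of the two integrands via A.5. -/
lemma ptwise (r s : ℝ) : ∃ c C : ℝ, 0 < c ∧ 0 < C ∧ ∀ z ∈ B.Ω, ∀ u ∈ B.Ω,
    (c * (‖ipAux B.σ (B.K z) (B.K u)‖ ^ ((r - s) / 2) / nKAux B.σ B.K u ^ r) ≤
      ‖ipAux B.σ (B.K z) (B.K (B.φ z u))‖ ^ ((r + s) / 2) /
        (nKAux B.σ B.K z ^ s * nKAux B.σ B.K (B.φ z u) ^ r)) ∧
    (‖ipAux B.σ (B.K z) (B.K (B.φ z u))‖ ^ ((r + s) / 2) /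
        (nKAux B.σ B.K z ^ s * nKAux B.σ B.K (B.φ z u) ^ r) ≤
      C * (‖ipAux B.σ (B.K z) (B.K u)‖ ^ ((r - s) / 2) / nKAux B.σ B.K u ^ r)) := by
  obtain ⟨c5, C5, hc5, hA5⟩ := B.A5
  have hC5 : 0 < C5 := by
    have hφ0 : B.φ 0 0 ∈ B.Ω := B.φ_mapsTo 0 B.zero_mem B.zero_mem
    have hp := B.nK_pos _ hφ0
    obtain ⟨h1, h2⟩ := hA5 0 B.zero_mem 0 B.zero_mem
    have h3 : 0 < C5 / nKAux B.σ B.K (B.φ 0 0) := lt_of_lt_of_le (by positivity) (h1.trans h2)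
    have := (div_pos_iff.mp h3)
    rcases this with ⟨h, _⟩ | ⟨_, h⟩
    · exact h
    · linarith
  set e1 := (r - s) / 2 with he1
  set e2 := (r + s) / 2 with he2
  set m1 := min (c5 ^ e1) (C5 ^ e1) with hm1
  set M1 := max (c5 ^ e1) (C5 ^ e1) with hM1
  set m2 := min (c5 ^ e2) (C5 ^ e2) with hm2
  set M2 := max (c5 ^ e2) (C5 ^ e2) with hM2
  have hm1p : 0 < m1 := lt_min (Real.rpow_pos_of_pos hc5 _) (Real.rpow_pos_of_pos hC5 _)
  have hM1p : 0 < M1 := lt_of_lt_of_le hm1p (min_le_max)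
  have hm2p : 0 < m2 := lt_min (Real.rpow_pos_of_pos hc5 _) (Real.rpow_pos_of_pos hC5 _)
  have hM2p : 0 < M2 := lt_of_lt_of_le hm2p (min_le_max)
  refine ⟨m2 / M1, M2 / m1, by positivity, by positivity, ?_⟩
  intro z hz u hu
  have hvΩ : B.φ z u ∈ B.Ω := B.φ_mapsTo z hz hu
  have hφv : B.φ z (B.φ z u) = u := B.φ_involutive z hz u hu
  set a := nKAux B.σ B.K z with ha
  set b := nKAux B.σ B.K u with hb
  set p := nKAux B.σ B.K (B.φ z u) with hp
  have hap : 0 < a := B.nK_pos z hz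
  have hbp : 0 < b := B.nK_pos u hu
  have hpp : 0 < p := B.nK_pos _ hvΩ
  set t := ‖ipAux B.σ (B.K z) (B.K u)‖ with hti
  set t' := ‖ipAux B.σ (B.K z) (B.K (B.φ z u))‖ with hti'
  obtain ⟨h1, h2⟩ := hA5 z hz u hu
  obtain ⟨h1', h2'⟩ := hA5 z hz (B.φ z u) hvΩ
  rw [hφv] at h1' h2'
  have habp : 0 < a * b := mul_pos hap hbp
  have happ : 0 < a * p := mul_pos hap hpp
  have ht1 : c5 * (a * b / p) ≤ t := by
    rw [div_le_div_iff₀ hpp habp] at h1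
    rw [mul_div_assoc', div_le_iff₀ hpp]
    linarith
  have ht2 : t ≤ C5 * (a * b / p) := by
    rw [div_le_div_iff₀ habp hpp] at h2
    rw [mul_div_assoc', le_div_iff₀ hpp]
    linarith
  have ht1' : c5 * (a * p / b) ≤ t' := by
    rw [div_le_div_iff₀ hbp happ] at h1'
    rw [mul_div_assoc', div_le_iff₀ hbp]
    linarith
  have ht2' : t' ≤ C5 * (a * p / b) := by
    rw [div_le_div_iff₀ happ hbp] at h2'
    rw [mul_div_assoc', le_div_iff₀ hbp]
    linarith
  have hs1 := RF.rpow_sandwich hc5 (show 0 < a * b / p by positivity) ht1 ht2 e1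
  have hs2 := RF.rpow_sandwich hc5 (show 0 < a * p / b by positivity) ht1' ht2' e2
  set X := a ^ e1 / (b ^ e2 * p ^ e1) with hX
  have hbe1 : (0:ℝ) < b ^ e1 := Real.rpow_pos_of_pos hbp _
  have hbe2 : (0:ℝ) < b ^ e2 := Real.rpow_pos_of_pos hbp _
  have hbr : (0:ℝ) < b ^ r := Real.rpow_pos_of_pos hbp _
  have hae1 : (0:ℝ) < a ^ e1 := Real.rpow_pos_of_pos hap _
  have has : (0:ℝ) < a ^ s := Real.rpow_pos_of_pos hap _
  have hpe1 : (0:ℝ) < p ^ e1 := Real.rpow_pos_of_pos hpp _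
  have hpr : (0:ℝ) < p ^ r := Real.rpow_pos_of_pos hpp _
  have hfX : (a * b / p) ^ e1 / b ^ r = X := by
    rw [Real.div_rpow (by positivity) hpp.le, Real.mul_rpow hap.le hbp.le, hX]
    rw [show b ^ e2 = b ^ r / b ^ e1 by
      rw [← Real.rpow_sub hbp]; congr 1; rw [he1, he2]; ring]
    field_simp
  have hgX : (a * p / b) ^ e2 / (a ^ s * p ^ r) = X := by
    rw [Real.div_rpow (by positivity) hbp.le, Real.mul_rpow hap.le hpp.le, hX]
    rw [show a ^ e2 = a ^ s * a ^ e1 by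
      rw [← Real.rpow_add hap]; congr 1; rw [he1, he2]; ring]
    rw [show p ^ e2 = p ^ r / p ^ e1 by
      rw [← Real.rpow_sub hpp]; congr 1; rw [he1, he2]; ring]
    field_simp
  have hXp : 0 < X := by rw [hX]; positivity
  have hf_lb : m1 * X ≤ t ^ e1 / b ^ r := by
    rw [← hfX, ← mul_div_assoc]
    exact (div_le_div_iff_of_pos_right hbr).mpr hs1.1
  have hf_ub : t ^ e1 / b ^ r ≤ M1 * X := by
    rw [← hfX, ← mul_div_assoc]
    exact (div_le_div_iff_of_pos_right hbr).mpr hs1.2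
  have hg_lb : m2 * X ≤ t' ^ e2 / (a ^ s * p ^ r) := by
    rw [← hgX, ← mul_div_assoc]
    exact (div_le_div_iff_of_pos_right (by positivity)).mpr hs2.1
  have hg_ub : t' ^ e2 / (a ^ s * p ^ r) ≤ M2 * X := by
    rw [← hgX, ← mul_div_assoc]
    exact (div_le_div_iff_of_pos_right (by positivity)).mpr hs2.2
  have hM1ne : M1 ≠ 0 := hM1p.ne'
  have hm1ne : m1 ≠ 0 := hm1p.ne'
  constructor
  · calc m2 / M1 * (t ^ e1 / b ^ r) ≤ m2 / M1 * (M1 * X) :=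
        mul_le_mul_of_nonneg_left hf_ub (div_nonneg hm2p.le hM1p.le)
      _ = m2 * X := by
        field_simp
      _ ≤ t' ^ e2 / (a ^ s * p ^ r) := hg_lb
  · calc t' ^ e2 / (a ^ s * p ^ r) ≤ M2 * X := hg_ub
      _ = M2 / m1 * (m1 * X) := by
        field_simp
      _ ≤ M2 / m1 * (t ^ e1 / b ^ r) :=
        mul_le_mul_of_nonneg_left hf_lb (div_nonneg hM2p.le hm1p.le)

end RF



/-- Rudin–Forelli quasi-identity: for all `r, s ∈ ℝ`,
`∫ |⟨K_z,K_w⟩|^{(r−s)/2}/‖K_w‖^r dλ(w) ≃ ∫ |⟨K_z,K_w⟩|^{(r+s)/2}/(‖K_z‖^s ‖K_w‖^r) dλ(w)`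
with implied constants independent of `z ∈ Ω` (depending only on `r` and `s`). -/
theorem statement19 {n : ℕ} (B : VBergman n) :
    ∀ r s : ℝ, ∃ c C : ℝ, 0 < c ∧ ∀ z ∈ B.Ω,
      (c * ∫ w, ‖B.ipSc (B.K z) (B.K w)‖ ^ ((r - s) / 2) / B.nK w ^ r ∂(lamAux B.σ B.K) ≤
        ∫ w, ‖B.ipSc (B.K z) (B.K w)‖ ^ ((r + s) / 2) /
          (B.nK z ^ s * B.nK w ^ r) ∂(lamAux B.σ B.K)) ∧
      (∫ w, ‖B.ipSc (B.K z) (B.K w)‖ ^ ((r + s) / 2) /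
          (B.nK z ^ s * B.nK w ^ r) ∂(lamAux B.σ B.K) ≤
        C * ∫ w, ‖B.ipSc (B.K z) (B.K w)‖ ^ ((r - s) / 2) / B.nK w ^ r ∂(lamAux B.σ B.K)) := by
  intro r s
  obtain ⟨cq, Cq, hcq, hCq1, hCOV⟩ := RF.cov B
  obtain ⟨cp, Cp, hcp, hCp, hPT⟩ := RF.ptwise B r s
  set K₀ : ℝ≥0∞ := ENNReal.ofReal cp⁻¹ * (Cq : ℝ≥0∞) with hK₀
  set K₁ : ℝ≥0∞ := ((cq : ℝ≥0∞))⁻¹ * ENNReal.ofReal Cp with hK₁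
  have hK₀0 : K₀ ≠ 0 := by
    rw [hK₀]
    apply mul_ne_zero
    · exact ne_of_gt (ENNReal.ofReal_pos.mpr (by positivity))
    · exact ne_of_gt (lt_of_lt_of_le zero_lt_one (by exact_mod_cast hCq1))
  have hK₀top : K₀ ≠ ∞ := ENNReal.mul_ne_top ENNReal.ofReal_ne_top ENNReal.coe_ne_top
  have hK₁0 : K₁ ≠ 0 := by
    rw [hK₁]
    exact mul_ne_zero (ENNReal.inv_ne_zero.mpr ENNReal.coe_ne_top)
      (ne_of_gt (ENNReal.ofReal_pos.mpr hCp))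
  have hK₁top : K₁ ≠ ∞ := ENNReal.mul_ne_top
    (ENNReal.inv_ne_top.mpr (ENNReal.coe_ne_zero.mpr hcq.ne')) ENNReal.ofReal_ne_top
  refine ⟨(K₀.toReal)⁻¹, K₁.toReal, inv_pos.mpr (ENNReal.toReal_pos hK₀0 hK₀top), ?_⟩
  intro z hz
  simp only [VBergman.ipSc, VBergman.nK]
  have hipm := RF.aemeas_ipn B hz
  have hnkm := RF.aemeas_nK B
  have hFae0 : AEMeasurable
      (fun w => ‖ipAux B.σ (B.K z) (B.K w)‖ ^ ((r - s) / 2) / nKAux B.σ B.K w ^ r)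
      (lamAux B.σ B.K) :=
    ((RF.measurable_rpow_const _).comp_aemeasurable hipm).div
      ((RF.measurable_rpow_const _).comp_aemeasurable hnkm)
  have hGae0 : AEMeasurable
      (fun w => ‖ipAux B.σ (B.K z) (B.K w)‖ ^ ((r + s) / 2) /
        (nKAux B.σ B.K z ^ s * nKAux B.σ B.K w ^ r)) (lamAux B.σ B.K) :=
    ((RF.measurable_rpow_const _).comp_aemeasurable hipm).div
      (((RF.measurable_rpow_const _).comp_aemeasurable hnkm).const_mul _)
  have hFnn : 0 ≤ᵐ[lamAux B.σ B.K]
      (fun w => ‖ipAux B.σ (B.K z) (B.K w)‖ ^ ((r - s) / 2) / nKAux B.σ B.K w ^ r) :=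
    Filter.Eventually.of_forall fun w =>
      div_nonneg (Real.rpow_nonneg (norm_nonneg _) _)
        (Real.rpow_nonneg (Real.sqrt_nonneg _) _)
  have hGnn : 0 ≤ᵐ[lamAux B.σ B.K]
      (fun w => ‖ipAux B.σ (B.K z) (B.K w)‖ ^ ((r + s) / 2) /
        (nKAux B.σ B.K z ^ s * nKAux B.σ B.K w ^ r)) :=
    Filter.Eventually.of_forall fun w =>
      div_nonneg (Real.rpow_nonneg (norm_nonneg _) _)
        (mul_nonneg (Real.rpow_nonneg (Real.sqrt_nonneg _) _)
          (Real.rpow_nonneg (Real.sqrt_nonneg _) _))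
  have hI1 : ∫ w, ‖ipAux B.σ (B.K z) (B.K w)‖ ^ ((r - s) / 2) /
        nKAux B.σ B.K w ^ r ∂(lamAux B.σ B.K) =
      (∫⁻ w, ENNReal.ofReal (‖ipAux B.σ (B.K z) (B.K w)‖ ^ ((r - s) / 2) /
        nKAux B.σ B.K w ^ r) ∂(lamAux B.σ B.K)).toReal :=
    integral_eq_lintegral_of_nonneg_ae hFnn hFae0.aestronglyMeasurable
  have hI2 : ∫ w, ‖ipAux B.σ (B.K z) (B.K w)‖ ^ ((r + s) / 2) /
        (nKAux B.σ B.K z ^ s * nKAux B.σ B.K w ^ r) ∂(lamAux B.σ B.K) =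
      (∫⁻ w, ENNReal.ofReal (‖ipAux B.σ (B.K z) (B.K w)‖ ^ ((r + s) / 2) /
        (nKAux B.σ B.K z ^ s * nKAux B.σ B.K w ^ r)) ∂(lamAux B.σ B.K)).toReal :=
    integral_eq_lintegral_of_nonneg_ae hGnn hGae0.aestronglyMeasurable
  set F : Cn n → ℝ≥0∞ := fun w => ENNReal.ofReal
    (‖ipAux B.σ (B.K z) (B.K w)‖ ^ ((r - s) / 2) / nKAux B.σ B.K w ^ r) with hF
  set G : Cn n → ℝ≥0∞ := fun w => ENNReal.ofReal
    (‖ipAux B.σ (B.K z) (B.K w)‖ ^ ((r + s) / 2) /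
      (nKAux B.σ B.K z ^ s * nKAux B.σ B.K w ^ r)) with hG
  have hFae : AEMeasurable F (lamAux B.σ B.K) :=
    ENNReal.measurable_ofReal.comp_aemeasurable hFae0
  have hGae : AEMeasurable G (lamAux B.σ B.K) :=
    ENNReal.measurable_ofReal.comp_aemeasurable hGae0
  have hcov := hCOV z hz G hGae
  have hptF : ∀ᵐ w ∂(lamAux B.σ B.K), F w ≤ ENNReal.ofReal cp⁻¹ * G (B.φ z w) := by
    filter_upwards [RF.ae_memΩ B] with w hw
    have h := (hPT z hz w hw).1
    have h2 : ‖ipAux B.σ (B.K z) (B.K w)‖ ^ ((r - s) / 2) / nKAux B.σ B.K w ^ r ≤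
        cp⁻¹ * (‖ipAux B.σ (B.K z) (B.K (B.φ z w))‖ ^ ((r + s) / 2) /
          (nKAux B.σ B.K z ^ s * nKAux B.σ B.K (B.φ z w) ^ r)) := by
      have he : ‖ipAux B.σ (B.K z) (B.K w)‖ ^ ((r - s) / 2) / nKAux B.σ B.K w ^ r =
          cp⁻¹ * (cp * (‖ipAux B.σ (B.K z) (B.K w)‖ ^ ((r - s) / 2) /
            nKAux B.σ B.K w ^ r)) := by
        field_simp
      rw [he]
      exact mul_le_mul_of_nonneg_left h (by positivity)
    calc F w ≤ ENNReal.ofReal (cp⁻¹ * (‖ipAux B.σ (B.K z) (B.K (B.φ z w))‖ ^ ((r + s) / 2) /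
          (nKAux B.σ B.K z ^ s * nKAux B.σ B.K (B.φ z w) ^ r))) :=
        ENNReal.ofReal_le_ofReal h2
      _ = ENNReal.ofReal cp⁻¹ * G (B.φ z w) := ENNReal.ofReal_mul (by positivity)
  have hptG : ∀ᵐ w ∂(lamAux B.σ B.K), G (B.φ z w) ≤ ENNReal.ofReal Cp * F w := by
    filter_upwards [RF.ae_memΩ B] with w hw
    have h := (hPT z hz w hw).2
    calc G (B.φ z w) ≤ ENNReal.ofReal (Cp * (‖ipAux B.σ (B.K z) (B.K w)‖ ^ ((r - s) / 2) /
          nKAux B.σ B.K w ^ r)) := ENNReal.ofReal_le_ofReal h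
      _ = ENNReal.ofReal Cp * F w := ENNReal.ofReal_mul hCp.le
  have chain2 : ∫⁻ w, F w ∂(lamAux B.σ B.K) ≤ K₀ * ∫⁻ w, G w ∂(lamAux B.σ B.K) := by
    calc ∫⁻ w, F w ∂(lamAux B.σ B.K)
        ≤ ∫⁻ w, ENNReal.ofReal cp⁻¹ * G (B.φ z w) ∂(lamAux B.σ B.K) := lintegral_mono_ae hptF
      _ = ENNReal.ofReal cp⁻¹ * ∫⁻ w, G (B.φ z w) ∂(lamAux B.σ B.K) :=
        lintegral_const_mul' _ _ ENNReal.ofReal_ne_top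
      _ ≤ ENNReal.ofReal cp⁻¹ * ((Cq : ℝ≥0∞) * ∫⁻ w, G w ∂(lamAux B.σ B.K)) :=
        mul_le_mul_right hcov.2 _
      _ = K₀ * ∫⁻ w, G w ∂(lamAux B.σ B.K) := by rw [hK₀, mul_assoc]
  have chain1 : ∫⁻ w, G w ∂(lamAux B.σ B.K) ≤ K₁ * ∫⁻ w, F w ∂(lamAux B.σ B.K) := by
    have h1 : (cq : ℝ≥0∞) * ∫⁻ w, G w ∂(lamAux B.σ B.K) ≤
        ENNReal.ofReal Cp * ∫⁻ w, F w ∂(lamAux B.σ B.K) := by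
      calc (cq : ℝ≥0∞) * ∫⁻ w, G w ∂(lamAux B.σ B.K)
          ≤ ∫⁻ w, G (B.φ z w) ∂(lamAux B.σ B.K) := hcov.1
        _ ≤ ∫⁻ w, ENNReal.ofReal Cp * F w ∂(lamAux B.σ B.K) := lintegral_mono_ae hptG
        _ = ENNReal.ofReal Cp * ∫⁻ w, F w ∂(lamAux B.σ B.K) :=
          lintegral_const_mul' _ _ ENNReal.ofReal_ne_top
    calc ∫⁻ w, G w ∂(lamAux B.σ B.K)
        = (cq : ℝ≥0∞)⁻¹ * ((cq : ℝ≥0∞) * ∫⁻ w, G w ∂(lamAux B.σ B.K)) := by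
          rw [← mul_assoc, ENNReal.inv_mul_cancel (ENNReal.coe_ne_zero.mpr hcq.ne')
            ENNReal.coe_ne_top, one_mul]
      _ ≤ (cq : ℝ≥0∞)⁻¹ * (ENNReal.ofReal Cp * ∫⁻ w, F w ∂(lamAux B.σ B.K)) :=
          mul_le_mul_right h1 _
      _ = K₁ * ∫⁻ w, F w ∂(lamAux B.σ B.K) := by rw [hK₁, mul_assoc]
  rw [hI1, hI2]
  set A := ∫⁻ w, F w ∂(lamAux B.σ B.K) with hA'
  set Bv := ∫⁻ w, G w ∂(lamAux B.σ B.K) with hBv'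
  by_cases hA : A = ∞
  · have hBv : Bv = ∞ := by
      by_contra hBv
      exact (ne_top_of_le_ne_top (ENNReal.mul_ne_top hK₀top hBv) chain2) hA
    rw [hA, hBv]
    simp
  · have hBv : Bv ≠ ∞ := ne_top_of_le_ne_top (ENNReal.mul_ne_top hK₁top hA) chain1
    constructor
    · have h : A.toReal ≤ K₀.toReal * Bv.toReal := by
        have := ENNReal.toReal_mono (ENNReal.mul_ne_top hK₀top hBv) chain2
        rwa [ENNReal.toReal_mul] at this
      have hKp : 0 < K₀.toReal := ENNReal.toReal_pos hK₀0 hK₀top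
      calc (K₀.toReal)⁻¹ * A.toReal ≤ (K₀.toReal)⁻¹ * (K₀.toReal * Bv.toReal) :=
            mul_le_mul_of_nonneg_left h (by positivity)
        _ = Bv.toReal := by field_simp
    · have h := ENNReal.toReal_mono (ENNReal.mul_ne_top hK₁top hA) chain1
      rwa [ENNReal.toReal_mul] at h

end
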